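/- Upper-tail concentration of the offline optimum via weak duality and Hoeffding's inequality: in the stochastic online resource allocation model, for every fixed μ ∈ ℝ^m with μ ≥ 0 componentwise and every y > 0: P( OPT(γ⃗) − T·D̄(μ | P) > y ) ≤ exp( −2y² / (r̄²·T) ). -/

import Mathlib

open MeasureTheory Finset Real

private lemma amgm4 (p q A B : ℝ) : p * q * (A * B) ≤ 1 / 4 * (q * A + p * B) ^ 2 := by
  nlinarith [sq_nonneg (q * A - p * B)]

private lemma lemA (p : ℝ) (hp0 : 0 ≤ p) (hp1 : p ≤ 1) (h : ℝ) :
    (1 - p) * Real.exp (-p * h) + p * Real.exp ((1 - p) * h) ≤ Real.exp (h ^ 2 / 8) := by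
  set q : ℝ := 1 - p with hq
  have hq0 : 0 ≤ q := by rw [hq]; linarith
  set u : ℝ → ℝ := fun x => q * Real.exp (-p * x) + p * Real.exp (q * x) with hudef
  have hupos : ∀ x, 0 < u x := by
    intro x
    have hA' := Real.exp_pos (-p * x)
    have hB' := Real.exp_pos (q * x)
    show 0 < q * Real.exp (-p * x) + p * Real.exp (q * x)
    rcases eq_or_lt_of_le hp0 with hp | hp
    · rw [hq, ← hp]
      positivity
    · have h1 : 0 < p * Real.exp (q * x) := mul_pos hp hB'
      have h2 : 0 ≤ q * Real.exp (-p * x) := mul_nonneg hq0 hA'.le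
      linarith
  set v : ℝ → ℝ := fun x => p * q * (Real.exp (q * x) - Real.exp (-p * x)) with hvdef
  set w : ℝ → ℝ := fun x => p * q * (q * Real.exp (q * x) + p * Real.exp (-p * x)) with hwdef
  have hA : ∀ x : ℝ, HasDerivAt (fun y => Real.exp (-p * y)) (Real.exp (-p * x) * (-p)) x := by
    intro x
    simpa using ((hasDerivAt_id x).const_mul (-p)).exp
  have hB : ∀ x : ℝ, HasDerivAt (fun y => Real.exp (q * y)) (Real.exp (q * x) * q) x := by
    intro x
    simpa using ((hasDerivAt_id x).const_mul q).exp
  have hu : ∀ x, HasDerivAt u (v x) x := by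
    intro x
    have := ((hA x).const_mul q).add ((hB x).const_mul p)
    refine this.congr_deriv ?_
    simp only [hvdef]; ring
  have hv : ∀ x, HasDerivAt v (w x) x := by
    intro x
    have := (((hB x).sub (hA x)).const_mul (p * q))
    refine this.congr_deriv ?_
    simp only [hwdef]; ring
  set g : ℝ → ℝ := fun x => x / 4 - v x / u x with hgdef
  set g' : ℝ → ℝ := fun x =>
    1 / 4 - p * q * (Real.exp (-p * x) * Real.exp (q * x)) / (u x) ^ 2 with hg'def
  have hg : ∀ x, HasDerivAt g (g' x) x := by
    intro x
    have hd : HasDerivAt (fun y => v y / u y)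
        ((w x * u x - v x * v x) / (u x) ^ 2) x := (hv x).div (hu x) (hupos x).ne'
    have := ((hasDerivAt_id x).div_const 4).sub hd
    refine this.congr_deriv ?_
    have hid : w x * u x - v x * v x = p * q * (Real.exp (-p * x) * Real.exp (q * x)) := by
      simp only [hwdef, hudef, hvdef, hq]
      ring
    simp only [hg'def, hgdef, hid]
  have hg'nonneg : ∀ x, 0 ≤ g' x := by
    intro x
    have hA' := Real.exp_pos (-p * x)
    have hB' := Real.exp_pos (q * x)
    have hu2 : (0:ℝ) < (u x) ^ 2 := pow_pos (hupos x) 2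
    have hUdef : u x = q * Real.exp (-p * x) + p * Real.exp (q * x) := rfl
    simp only [hg'def, sub_nonneg, div_le_iff₀ hu2]
    rw [hUdef]
    exact amgm4 p q _ _
  have hgmono : Monotone g :=
    monotone_of_deriv_nonneg (fun x => (hg x).differentiableAt)
      (fun x => by rw [(hg x).deriv]; exact hg'nonneg x)
  have hg0 : g 0 = 0 := by simp [hgdef, hvdef]
  set f : ℝ → ℝ := fun x => x ^ 2 / 8 - Real.log (u x) with hfdef
  have hf : ∀ x, HasDerivAt f (g x) x := by
    intro x
    have hlog : HasDerivAt (fun y => Real.log (u y)) (v x / u x) x := by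
      have := (hu x).log (hupos x).ne'
      exact this
    have := ((hasDerivAt_pow 2 x).div_const 8).sub hlog
    refine this.congr_deriv ?_
    simp only [hgdef, pow_one]
    ring
  have hf0 : f 0 = 0 := by
    have : u 0 = 1 := by simp [hudef, hq]
    simp [hfdef, this]
  have hfnonneg : ∀ x, 0 ≤ f x := by
    intro x
    rcases le_total 0 x with hx | hx
    · have hmono : MonotoneOn f (Set.Ici 0) := by
        apply monotoneOn_of_deriv_nonneg (convex_Ici 0)
        · exact Continuous.continuousOn (by
            exact continuous_iff_continuousAt.mpr fun y => (hf y).continuousAt)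
        · exact fun y _ => (hf y).differentiableAt.differentiableWithinAt
        · intro y hy
          rw [(hf y).deriv]
          have : (0:ℝ) ≤ y := le_of_lt (by simpa using hy)
          calc (0:ℝ) = g 0 := hg0.symm
            _ ≤ g y := hgmono this
      have := hmono (Set.self_mem_Ici) (Set.mem_Ici.mpr hx) hx
      rw [hf0] at this; exact this
    · have hanti : AntitoneOn f (Set.Iic 0) := by
        apply antitoneOn_of_deriv_nonpos (convex_Iic 0)
        · exact Continuous.continuousOn (by
            exact continuous_iff_continuousAt.mpr fun y => (hf y).continuousAt)
        · exact fun y _ => (hf y).differentiableAt.differentiableWithinAt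
        · intro y hy
          rw [(hf y).deriv]
          have hy0 : y ≤ (0:ℝ) := le_of_lt (by simpa using hy)
          calc g y ≤ g 0 := hgmono hy0
            _ = 0 := hg0
      have := hanti (Set.mem_Iic.mpr hx) (Set.self_mem_Iic) hx
      rw [hf0] at this; exact this
  have := hfnonneg h
  have hlog : Real.log (u h) ≤ h ^ 2 / 8 := by simp only [hfdef] at this; linarith
  have := (Real.log_le_iff_le_exp (hupos h)).mp hlog
  simpa [hudef, hq, add_comm] using this


private lemma lemA' (p : ℝ) (hp0 : 0 ≤ p) (hp1 : p ≤ 1) (h : ℝ)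
    (hAA : (1 - p) * Real.exp (-p * h) + p * Real.exp ((1 - p) * h) ≤ Real.exp (h ^ 2 / 8)) :
    (1 - p) + p * Real.exp h ≤ Real.exp (p * h + h ^ 2 / 8) := by
  have hpos := Real.exp_pos (p * h)
  have := mul_le_mul_of_nonneg_right hAA hpos.le
  calc (1 - p) + p * Real.exp h
      = ((1 - p) * Real.exp (-p * h) + p * Real.exp ((1 - p) * h)) * Real.exp (p * h) := by
        have e1 : Real.exp (-p * h) * Real.exp (p * h) = 1 := by
          rw [← Real.exp_add]; simp
        have e2 : Real.exp ((1 - p) * h) * Real.exp (p * h) = Real.exp h := by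
          rw [← Real.exp_add]; congr 1; ring
        rw [add_mul, mul_assoc, mul_assoc, e1, e2, mul_one]
    _ ≤ Real.exp (h ^ 2 / 8) * Real.exp (p * h) := this
    _ = Real.exp (p * h + h ^ 2 / 8) := by rw [← Real.exp_add]; ring_nf

private lemma lemB {α : Type*} [MeasurableSpace α] (ν : Measure α) [IsProbabilityMeasure ν]
    (f : α → ℝ) (hf : Measurable f) (c : ℝ) (hc : 0 < c)
    (h0 : ∀ x, 0 ≤ f x) (h1 : ∀ x, f x ≤ c) (l : ℝ)
    (hAA : ∀ p : ℝ, 0 ≤ p → p ≤ 1 →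
      (1 - p) * Real.exp (-p * (l * c)) + p * Real.exp ((1 - p) * (l * c)) ≤
        Real.exp ((l * c) ^ 2 / 8)) :
    ∫ x, Real.exp (l * f x) ∂ν ≤ Real.exp (l * ∫ x, f x ∂ν + (l * c) ^ 2 / 8) := by
  have hfint : Integrable f ν := by
    refine (integrable_const c).mono' hf.aestronglyMeasurable (ae_of_all _ fun x => ?_)
    rw [Real.norm_eq_abs, abs_of_nonneg (h0 x)]
    exact h1 x
  set m : ℝ := ∫ x, f x ∂ν with hm
  have hm0 : 0 ≤ m := integral_nonneg h0
  have hm1 : m ≤ c := by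
    calc m ≤ ∫ _ : α, c ∂ν := integral_mono hfint (integrable_const c) h1
      _ = c := by simp
  set p : ℝ := m / c with hp
  have hp0 : 0 ≤ p := div_nonneg hm0 hc.le
  have hp1 : p ≤ 1 := (div_le_one hc).mpr hm1
  -- pointwise convexity bound
  have hpt : ∀ x, Real.exp (l * f x) ≤ (1 - f x / c) + (f x / c) * Real.exp (l * c) := by
    intro x
    have ht0 : 0 ≤ f x / c := div_nonneg (h0 x) hc.le
    have ht1 : f x / c ≤ 1 := (div_le_one hc).mpr (h1 x)
    have := convexOn_exp.2 (Set.mem_univ (0 : ℝ)) (Set.mem_univ (l * c))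
      (by linarith : (0:ℝ) ≤ 1 - f x / c) ht0 (by ring)
    simp only [smul_eq_mul, mul_zero, zero_add, Real.exp_zero, mul_one] at this
    have harg : f x / c * (l * c) = l * f x := by field_simp
    rw [harg] at this
    convert this using 2
  have hint1 : Integrable (fun x => Real.exp (l * f x)) ν := by
    refine (integrable_const (Real.exp (|l| * c))).mono'
      ((hf.const_mul l).exp.aestronglyMeasurable) (ae_of_all _ fun x => ?_)
    rw [Real.norm_eq_abs, abs_of_pos (Real.exp_pos _)]
    have : l * f x ≤ |l| * c := by
      calc l * f x ≤ |l| * f x := mul_le_mul_of_nonneg_right (le_abs_self l) (h0 x)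
        _ ≤ |l| * c := mul_le_mul_of_nonneg_left (h1 x) (abs_nonneg l)
    exact Real.exp_le_exp.mpr this
  have hint2 : Integrable (fun x => (1 - f x / c) + (f x / c) * Real.exp (l * c)) ν := by
    refine Integrable.add ?_ ?_
    · exact (integrable_const 1).sub (hfint.div_const c)
    · exact (hfint.div_const c).mul_const _
  have hintle : ∫ x, Real.exp (l * f x) ∂ν ≤ (1 - p) + p * Real.exp (l * c) := by
    calc ∫ x, Real.exp (l * f x) ∂ν
        ≤ ∫ x, ((1 - f x / c) + (f x / c) * Real.exp (l * c)) ∂ν :=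
          integral_mono hint1 hint2 hpt
      _ = (1 - p) + p * Real.exp (l * c) := by
          have h3 : Integrable (fun x => 1 - f x / c) ν := by
            exact (integrable_const (1:ℝ)).sub (hfint.div_const c)
          have h4 : Integrable (fun x => f x / c * Real.exp (l * c)) ν :=
            (hfint.div_const c).mul_const _
          rw [integral_add h3 h4, integral_mul_const]
          have h5 : ∫ x, (1 - f x / c) ∂ν = 1 - m / c := by
            rw [integral_sub (integrable_const 1) (hfint.div_const c)]
            rw [integral_div, ← hm]
            simp
          rw [h5, integral_div, ← hm, hp]
  calc ∫ x, Real.exp (l * f x) ∂ν ≤ (1 - p) + p * Real.exp (l * c) := hintle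
    _ ≤ Real.exp (p * (l * c) + (l * c) ^ 2 / 8) := lemA' p hp0 hp1 (l * c) (hAA p hp0 hp1)
    _ = Real.exp (l * m + (l * c) ^ 2 / 8) := by
        congr 1
        rw [hp]
        field_simp





/-- Upper-tail concentration of the offline optimum (weak duality + Hoeffding). -/
theorem stmt15
    {Ω S : Type*} [MeasurableSpace Ω] [MeasurableSpace S]
    (P : Measure Ω) [IsProbabilityMeasure P]
    (T m d : ℕ) (hT : 0 < T) (hm : 0 < m)
    (ρ : Fin m → ℝ) (hρ : ∀ j, 0 < ρ j)
    (rbar : ℝ) (hrbar : 0 < rbar)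
    (X : S → Set (Fin d → ℝ))
    (r : S → (Fin d → ℝ) → ℝ)
    (g : S → (Fin d → ℝ) → (Fin m → ℝ))
    (hX0 : ∀ s, (0 : Fin d → ℝ) ∈ X s)
    (hr0 : ∀ s, r s 0 = 0)
    (hrpos : ∀ s, ∀ x ∈ X s, 0 ≤ r s x)
    (hrbd : ∀ s, ∀ x ∈ X s, r s x ≤ rbar)
    (hg0 : ∀ s, g s 0 = 0)
    (hgpos : ∀ s, ∀ x ∈ X s, ∀ j, 0 ≤ g s x j)
    (γ : Fin T → Ω → S) (hγmeas : ∀ t, Measurable (γ t))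
    (Pdist : Measure S) [IsProbabilityMeasure Pdist]
    (hlaw : ∀ t, Measure.map (γ t) P = Pdist)
    (hindep : ProbabilityTheory.iIndepFun γ P)
    (OPT : Ω → ℝ)
    (hOPT : ∀ ω, OPT ω = sSup { v | ∃ x : Fin T → (Fin d → ℝ),
      (∀ t, x t ∈ X (γ t ω)) ∧ (∀ j, ∑ t, g (γ t ω) (x t) j ≤ (T : ℝ) * ρ j) ∧
      v = ∑ t, r (γ t ω) (x t) })
    (hOPTmeas : Measurable OPT)
    (μ : Fin m → ℝ) (hμ : ∀ j, 0 ≤ μ j)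
    (rstar : S → ℝ)
    (hrstar : ∀ s, rstar s = sSup { v | ∃ x ∈ X s, v = r s x - ∑ j, μ j * g s x j })
    (hrstarmeas : Measurable rstar)
    (Dbar : ℝ) (hDbar : Dbar = (∫ s, rstar s ∂Pdist) + ∑ j, μ j * ρ j)
    (y : ℝ) (hy : 0 < y) :
    P { ω | OPT ω - (T : ℝ) * Dbar > y } ≤
      ENNReal.ofReal (Real.exp (-(2 * y ^ 2) / (rbar ^ 2 * T))) := by
  classical
  have hTpos : (0:ℝ) < T := Nat.cast_pos.mpr hT
  -- bounds on rstar
  have hmemR : ∀ s : S, (0:ℝ) ∈ {v | ∃ x ∈ X s, v = r s x - ∑ j, μ j * g s x j} :=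
    fun s => ⟨0, hX0 s, by simp [hr0 s, hg0 s]⟩
  have hbddR : ∀ s : S, ∀ v ∈ {v | ∃ x ∈ X s, v = r s x - ∑ j, μ j * g s x j}, v ≤ rbar := by
    rintro s v ⟨x, hx, rfl⟩
    have h1 : r s x ≤ rbar := hrbd s x hx
    have h2 : 0 ≤ ∑ j, μ j * g s x j :=
      Finset.sum_nonneg fun j _ => mul_nonneg (hμ j) (hgpos s x hx j)
    linarith
  have hrstar0 : ∀ s, 0 ≤ rstar s := by
    intro s
    rw [hrstar s]
    exact le_csSup ⟨rbar, fun v hv => hbddR s v hv⟩ (hmemR s)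
  have hrstarbd : ∀ s, rstar s ≤ rbar := by
    intro s
    rw [hrstar s]
    exact Real.sSup_le (hbddR s) hrbar.le
  set M : ℝ := ∫ s, rstar s ∂Pdist with hM
  set K : ℝ := ∑ j, μ j * ρ j with hK
  have hK0 : 0 ≤ K := Finset.sum_nonneg fun j _ => mul_nonneg (hμ j) (hρ j).le
  -- weak duality
  have hweak : ∀ ω, OPT ω ≤ (∑ t, rstar (γ t ω)) + T * K := by
    intro ω
    rw [hOPT ω]
    apply Real.sSup_le
    · rintro v ⟨x, hxX, hxg, rfl⟩
      have hterm : ∀ t, r (γ t ω) (x t) ≤ rstar (γ t ω) + ∑ j, μ j * g (γ t ω) (x t) j := by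
        intro t
        have hmem : r (γ t ω) (x t) - ∑ j, μ j * g (γ t ω) (x t) j ∈
            {v | ∃ z ∈ X (γ t ω), v = r (γ t ω) z - ∑ j, μ j * g (γ t ω) z j} :=
          ⟨x t, hxX t, rfl⟩
        have hle := le_csSup ⟨rbar, fun v hv => hbddR _ v hv⟩ hmem
        rw [← hrstar (γ t ω)] at hle
        linarith
      calc ∑ t, r (γ t ω) (x t)
          ≤ ∑ t, (rstar (γ t ω) + ∑ j, μ j * g (γ t ω) (x t) j) :=
            Finset.sum_le_sum fun t _ => hterm t
        _ = (∑ t, rstar (γ t ω)) + ∑ j, μ j * ∑ t, g (γ t ω) (x t) j := by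
            rw [Finset.sum_add_distrib]
            congr 1
            rw [Finset.sum_comm]
            exact Finset.sum_congr rfl fun j _ => (Finset.mul_sum _ _ _).symm
        _ ≤ (∑ t, rstar (γ t ω)) + ∑ j, μ j * ((T:ℝ) * ρ j) := by
            gcongr with j hj
            · exact hμ j
            · exact hxg j
        _ = (∑ t, rstar (γ t ω)) + (T:ℝ) * K := by
            rw [hK, Finset.mul_sum]
            congr 1
            exact Finset.sum_congr rfl fun j _ => by ring
    · have h1 : 0 ≤ ∑ t, rstar (γ t ω) := Finset.sum_nonneg fun t _ => hrstar0 _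
      have h2 : 0 ≤ (T:ℝ) * K := mul_nonneg hTpos.le hK0
      linarith
  set Y : Fin T → Ω → ℝ := fun t => rstar ∘ γ t with hYdef
  set ε : ℝ := y + T * M with hε
  -- event inclusion
  have hsub : {ω | OPT ω - (T:ℝ) * Dbar > y} ⊆ {ω | ε ≤ (∑ t, Y t) ω} := by
    intro ω hω
    simp only [Set.mem_setOf_eq] at hω ⊢
    rw [Finset.sum_apply]
    have hw := hweak ω
    have hD : Dbar = M + K := by rw [hDbar]
    have hsum : ∑ t, Y t ω = ∑ t, rstar (γ t ω) :=
      Finset.sum_congr rfl fun t _ => rfl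
    rw [hsum, hε]
    rw [hD] at hω
    nlinarith [hω, hw]
  have hYmeas : ∀ t, Measurable (Y t) := fun t => hrstarmeas.comp (hγmeas t)
  have hYindep : ProbabilityTheory.iIndepFun Y P :=
    hindep.comp (fun _ => rstar) (fun _ => hrstarmeas)
  set l : ℝ := 4 * y / (rbar ^ 2 * T) with hl
  have hl0 : 0 < l :=
    div_pos (by linarith) (mul_pos (pow_pos hrbar 2) hTpos)
  have hmgfY : ∀ t, ProbabilityTheory.mgf (Y t) P l = ∫ s, Real.exp (l * rstar s) ∂Pdist := by
    intro t
    have h := integral_map (μ := P) (φ := γ t) (hγmeas t).aemeasurable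
      (f := fun s => Real.exp (l * rstar s))
      ((hrstarmeas.const_mul l).exp.aestronglyMeasurable)
    rw [hlaw t] at h
    rw [ProbabilityTheory.mgf]
    exact h.symm
  have hbound : ∫ s, Real.exp (l * rstar s) ∂Pdist ≤ Real.exp (l * M + (l * rbar) ^ 2 / 8) :=
    lemB Pdist rstar hrstarmeas rbar hrbar hrstar0 hrstarbd l
      (fun p hp0 hp1 => lemA p hp0 hp1 _)
  have hYint : ∀ t, Integrable (fun ω => Real.exp (l * Y t ω)) P := by
    intro t
    refine (integrable_const (Real.exp (l * rbar))).mono'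
      ((hYmeas t).const_mul l).exp.aestronglyMeasurable (ae_of_all _ fun ω => ?_)
    rw [Real.norm_eq_abs, abs_of_pos (Real.exp_pos _)]
    exact Real.exp_le_exp.mpr (mul_le_mul_of_nonneg_left (hrstarbd _) hl0.le)
  have hSint : Integrable (fun ω => Real.exp (l * (∑ t, Y t) ω)) P :=
    ProbabilityTheory.iIndepFun.integrable_exp_mul_sum hYindep hYmeas
      (fun t _ => hYint t)
  have hcher := ProbabilityTheory.measure_ge_le_exp_mul_mgf (μ := P) (X := ∑ t, Y t)
    ε hl0.le hSint
  have hmgfprod : ProbabilityTheory.mgf (∑ t, Y t) P l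
      = (∫ s, Real.exp (l * rstar s) ∂Pdist) ^ T := by
    rw [ProbabilityTheory.iIndepFun.mgf_sum hYindep hYmeas Finset.univ]
    rw [Finset.prod_congr rfl (fun t _ => hmgfY t), Finset.prod_const, Finset.card_univ,
      Fintype.card_fin]
  have hintnonneg : 0 ≤ ∫ s, Real.exp (l * rstar s) ∂Pdist :=
    integral_nonneg fun s => (Real.exp_pos _).le
  have hreal : (P {ω | ε ≤ (∑ t, Y t) ω}).toReal
      ≤ Real.exp (-(2 * y ^ 2) / (rbar ^ 2 * T)) := by
    calc (P {ω | ε ≤ (∑ t, Y t) ω}).toReal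
        ≤ Real.exp (-l * ε) * ProbabilityTheory.mgf (∑ t, Y t) P l := hcher
      _ ≤ Real.exp (-l * ε) * Real.exp (l * M + (l * rbar) ^ 2 / 8) ^ T := by
          rw [hmgfprod]
          exact mul_le_mul_of_nonneg_left (pow_le_pow_left₀ hintnonneg hbound T)
            (Real.exp_pos _).le
      _ = Real.exp (-l * ε + T * (l * M + (l * rbar) ^ 2 / 8)) := by
          rw [← Real.exp_nat_mul, ← Real.exp_add]
      _ = Real.exp (-(2 * y ^ 2) / (rbar ^ 2 * T)) := by
          congr 1
          rw [hl, hε]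
          have hc : rbar ≠ 0 := hrbar.ne'
          have hT' : (T:ℝ) ≠ 0 := hTpos.ne'
          field_simp
          ring
  calc P {ω | OPT ω - (T:ℝ) * Dbar > y}
      ≤ P {ω | ε ≤ (∑ t, Y t) ω} := measure_mono hsub
    _ = ENNReal.ofReal ((P {ω | ε ≤ (∑ t, Y t) ω}).toReal) :=
        (ENNReal.ofReal_toReal (measure_ne_top _ _)).symm
    _ ≤ ENNReal.ofReal (Real.exp (-(2 * y ^ 2) / (rbar ^ 2 * T))) :=
        ENNReal.ofReal_le_ofReal hreal
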